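/- Let f : ℝⁿ → ℝ be differentiable, x ∈ Ω, x̄ ∈ ℝⁿ with x ≠ x̄, μ̄ > 0, b₁ > 0, σ ∈ (0,1/2), and let G ∈ ℝ^{n×n} be symmetric with G ⪰ b₁‖μ̄(x − x̄)‖^σ I. Define Θ(y) := f(x) + ⟨∇f(x), y − x⟩ + (1/2)⟨y − x, G(y − x)⟩ + δ_{Π(x)}(y). If y ∈ ℝⁿ satisfies Θ(y) ≤ Θ(x), then y ∈ Π(x) and, with d := y − x: (a) ⟨∇f(x), d⟩ ≤ −(1/2)⟨d, Gd⟩ ≤ −(b₁/2)‖μ̄(x − x̄)‖^σ‖d‖², with strict inequality ⟨∇f(x), d⟩ < 0 whenever d ≠ 0; (b) g(x + αd) ≤ g(x) for every α ∈ (0,1]. -/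

import Mathlib

open scoped Classical

noncomputable section

/-- The box `Ω = {x : l ≤ x ≤ u}` in ℝⁿ. -/
def Om {n : ℕ} (l u : Fin n → ℝ) : Set (EuclideanSpace ℝ (Fin n)) :=
  {x | ∀ i, l i ≤ x i ∧ x i ≤ u i}

/-- The ℓ₀-norm (number of nonzero entries) of a vector. -/
def zeroNorm {m : ℕ} (v : Fin m → ℝ) : ℕ := (Function.support v).ncard

/-- `g(x) = λ₁‖Bx‖₀ + λ₂‖x‖₀ + δ_Ω(x)` as an extended-real-valued function. -/
def gfun {n p : ℕ} (B : Matrix (Fin p) (Fin n) ℝ) (lam1 lam2 : ℝ) (l u : Fin n → ℝ)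
    (x : EuclideanSpace ℝ (Fin n)) : EReal :=
  if x ∈ Om l u then
    ((lam1 * (zeroNorm (B.mulVec x) : ℝ) + lam2 * (zeroNorm x : ℝ) : ℝ) : EReal)
  else ⊤

/-- `Π(z) = {x ∈ Ω : supp(x) ⊆ supp(z), supp(Bx) ⊆ supp(Bz)}`. -/
def PiSet {n p : ℕ} (B : Matrix (Fin p) (Fin n) ℝ) (l u : Fin n → ℝ)
    (z : EuclideanSpace ℝ (Fin n)) : Set (EuclideanSpace ℝ (Fin n)) :=
  {x | x ∈ Om l u ∧ Function.support x ⊆ Function.support z ∧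
    Function.support (B.mulVec x) ⊆ Function.support (B.mulVec z)}

/-- `Θ(y) = f(x) + ⟨∇f(x), y−x⟩ + (1/2)⟨y−x, G(y−x)⟩ + δ_{Π(x)}(y)`. -/
def ThetaFun {n p : ℕ} (B : Matrix (Fin p) (Fin n) ℝ) (l u : Fin n → ℝ)
    (f : EuclideanSpace ℝ (Fin n) → ℝ) (G : Matrix (Fin n) (Fin n) ℝ)
    (x y : EuclideanSpace ℝ (Fin n)) : EReal :=
  if y ∈ PiSet B l u x then
    ((f x + (inner ℝ (gradient f x) (y - x) : ℝ)
      + (1 : ℝ) / 2 * (inner ℝ (y - x) ((WithLp.toLp 2 (G.mulVec (y - x)) : EuclideanSpace ℝ (Fin n))) : ℝ) : ℝ)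
      : EReal)
  else ⊤

/-- if `Θ(y) ≤ Θ(x)` then `y ∈ Π(x)` and, with `d = y − x`:
(a) `⟨∇f(x), d⟩ ≤ −(1/2)⟨d, Gd⟩ ≤ −(b₁/2)‖μ̄(x−x̄)‖^σ ‖d‖²`, strictly negative when `d ≠ 0`;
(b) `g(x + αd) ≤ g(x)` for every `α ∈ (0,1]`. -/
theorem stmt9 {n p : ℕ} (B : Matrix (Fin p) (Fin n) ℝ) (lam1 lam2 : ℝ)
    (hlam1 : 0 < lam1) (hlam2 : 0 < lam2)
    (l u : Fin n → ℝ) (hl : ∀ i, l i ≤ 0) (hu : ∀ i, 0 ≤ u i)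
    (f : EuclideanSpace ℝ (Fin n) → ℝ) (hf : Differentiable ℝ f)
    (x : EuclideanSpace ℝ (Fin n)) (hx : x ∈ Om l u)
    (xbar : EuclideanSpace ℝ (Fin n)) (hne : x ≠ xbar)
    (mubar b1 σ : ℝ) (hmubar : 0 < mubar) (hb1 : 0 < b1) (hσ : 0 < σ ∧ σ < 1 / 2)
    (G : Matrix (Fin n) (Fin n) ℝ) (hGsym : G.IsSymm)
    (hG : (G - (b1 * ‖mubar • (x - xbar)‖ ^ σ) • (1 : Matrix (Fin n) (Fin n) ℝ)).PosSemidef)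
    (y : EuclideanSpace ℝ (Fin n))
    (hy : ThetaFun B l u f G x y ≤ ThetaFun B l u f G x x) :
    y ∈ PiSet B l u x ∧
    (inner ℝ (gradient f x) (y - x) : ℝ) ≤
      -((1 : ℝ) / 2) * (inner ℝ (y - x) ((WithLp.toLp 2 (G.mulVec (y - x)) : EuclideanSpace ℝ (Fin n))) : ℝ) ∧
    -((1 : ℝ) / 2) * (inner ℝ (y - x) ((WithLp.toLp 2 (G.mulVec (y - x)) : EuclideanSpace ℝ (Fin n))) : ℝ) ≤
      -(b1 / 2) * ‖mubar • (x - xbar)‖ ^ σ * ‖y - x‖ ^ 2 ∧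
    (y - x ≠ 0 → (inner ℝ (gradient f x) (y - x) : ℝ) < 0) ∧
    (∀ α : ℝ, 0 < α → α ≤ 1 →
      gfun B lam1 lam2 l u (x + α • (y - x)) ≤ gfun B lam1 lam2 l u x) := by
  classical
  have hxPi : x ∈ PiSet B l u x := ⟨hx, subset_rfl, subset_rfl⟩
  have hΘx : ThetaFun B l u f G x x = ((f x : ℝ) : EReal) := by
    simp [ThetaFun, hxPi]
  have hyPi : y ∈ PiSet B l u x := by
    by_contra h
    rw [ThetaFun, if_neg h, hΘx] at hy
    exact absurd (top_le_iff.mp hy) (by simp)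
  rw [ThetaFun, if_pos hyPi, hΘx, EReal.coe_le_coe_iff] at hy
  set d : EuclideanSpace ℝ (Fin n) := y - x with hdd
  set q : ℝ := (inner ℝ d ((WithLp.toLp 2 (G.mulVec (y - x)) : EuclideanSpace ℝ (Fin n))) : ℝ) with hq
  have hkey : (inner ℝ (gradient f x) d : ℝ) + 1 / 2 * q ≤ 0 := by
    have := hy; linarith
  set c : ℝ := b1 * ‖mubar • (x - xbar)‖ ^ σ with hc
  have hcpos : 0 < c := by
    have hxe : mubar • (x - xbar) ≠ 0 := by
      simp [smul_eq_zero, hmubar.ne', sub_eq_zero, hne]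
    have : 0 < ‖mubar • (x - xbar)‖ := norm_pos_iff.mpr hxe
    positivity
  -- quadratic form bound
  have hquad : c * ‖d‖ ^ 2 ≤ q := by
    have h2 := hG.dotProduct_mulVec_nonneg (fun i => d i)
    have hstar : star (fun i => d i) = fun i => d i := by
      funext i; simp
    rw [hstar, Matrix.sub_mulVec, Matrix.smul_mulVec, Matrix.one_mulVec,
      dotProduct_sub, dotProduct_smul] at h2
    have hqd : q = dotProduct (d : Fin n → ℝ) (G.mulVec d) := by
      rw [hq]
      simp [dotProduct, PiLp.inner_apply, RCLike.inner_apply, mul_comm, hdd]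
    have hnd : ‖d‖ ^ 2 = dotProduct (d : Fin n → ℝ) (d : Fin n → ℝ) := by
      rw [← real_inner_self_eq_norm_sq]
      simp only [dotProduct, PiLp.inner_apply, RCLike.inner_apply, conj_trivial]
    rw [hqd, hnd]
    simpa [smul_eq_mul] using h2
  refine ⟨hyPi, by linarith, by nlinarith, ?_, ?_⟩
  · intro hd0
    have hdn : 0 < ‖d‖ := norm_pos_iff.mpr hd0
    have hcn : 0 < c * ‖d‖ ^ 2 := by positivity
    linarith
  · intro α hα0 hα1
    obtain ⟨hyΩ, hsupp, hsuppB⟩ := hyPi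
    set z : EuclideanSpace ℝ (Fin n) := x + α • d with hzdef
    have hz : ∀ i, z i = (1 - α) * x i + α * y i := by
      intro i
      simp only [hzdef, hdd, PiLp.add_apply, PiLp.smul_apply, PiLp.sub_apply, smul_eq_mul]
      ring
    have hzΩ : z ∈ Om l u := by
      intro i
      rw [hz i]
      constructor
      · nlinarith [(hx i).1, (hyΩ i).1]
      · nlinarith [(hx i).2, (hyΩ i).2]
    have hsz : Function.support z ⊆ Function.support x := by
      intro i hi
      by_contra hxi
      have hxi0 : x i = 0 := Function.notMem_support.mp hxi
      have hyi0 : y i = 0 := Function.notMem_support.mp (fun h => hxi (hsupp h))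
      exact hi (by rw [hz i, hxi0, hyi0]; ring)
    have hBz : ∀ j, B.mulVec z j = (1 - α) * B.mulVec x j + α * B.mulVec y j := by
      intro j
      simp only [Matrix.mulVec, dotProduct]
      rw [Finset.mul_sum, Finset.mul_sum, ← Finset.sum_add_distrib]
      refine Finset.sum_congr rfl fun i _ => ?_
      rw [hz i]; ring
    have hsBz : Function.support (B.mulVec z) ⊆ Function.support (B.mulVec x) := by
      intro j hj
      by_contra hxj
      have hxj0 : B.mulVec x j = 0 := Function.notMem_support.mp hxj
      have hyj0 : B.mulVec y j = 0 := Function.notMem_support.mp (fun h => hxj (hsuppB h))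
      exact hj (by rw [hBz j, hxj0, hyj0]; ring)
    have hn1 : zeroNorm (z : Fin n → ℝ) ≤ zeroNorm (x : Fin n → ℝ) :=
      Set.ncard_le_ncard hsz (Set.toFinite _)
    have hn2 : zeroNorm (B.mulVec z) ≤ zeroNorm (B.mulVec x) :=
      Set.ncard_le_ncard hsBz (Set.toFinite _)
    rw [gfun, gfun, if_pos hzΩ, if_pos hx, EReal.coe_le_coe_iff]
    have h1 : (zeroNorm (B.mulVec z) : ℝ) ≤ (zeroNorm (B.mulVec x) : ℝ) := Nat.cast_le.mpr hn2
    have h2 : (zeroNorm (z : Fin n → ℝ) : ℝ) ≤ (zeroNorm (x : Fin n → ℝ) : ℝ) := Nat.cast_le.mpr hn1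
    nlinarith

end
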